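/- Let I be a finite set, let f : I → ℕ be injective, and let X be a nonempty proper subset of I such that f(a) > f(e) for every a ∈ X and e ∈ I∖X (every item of X was seen further in the past than every item outside X). Then for every k ∈ ℕ, the signed count Σ_{A ⊆ I, A ∩ X ≠ ∅, min_A f = k} (−1)^{|A|+1}, taken over all subsets of I meeting X, equals 1 if k = max_{e∈I} f(e), equals −1 if k = max_{e∈I∖X} f(e), and equals 0 otherwise. (This is the multiple-item update rule of Theorem 6 of the paper, in the form consistent with its Figure 3 and specializing to Theorem 2 when |X| = 1: the histogram is incremented at the tesla value of the item seen furthest in the past and decremented at the largest tesla value among items outside X.) -/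

import Mathlib

/-- `min_A f` : the minimum of `f` over the (nonempty) finite set `A`. -/
noncomputable def minOnF {α : Type*} (f : α → ℕ) (A : Finset α) : ℕ :=
  sInf (f '' ↑A)

lemma minOn_eq_iff {α : Type*} {f : α → ℕ} {A : Finset α} (hA : A.Nonempty) {k : ℕ} :
    minOnF f A = k ↔ (∃ a ∈ A, f a = k) ∧ ∀ a ∈ A, k ≤ f a := by
  have hne : (f '' ↑A).Nonempty := by
    obtain ⟨a, ha⟩ := hA
    exact ⟨f a, ⟨a, by simpa using ha, rfl⟩⟩
  constructor
  · rintro rfl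
    obtain ⟨a, ha, hfa⟩ := Nat.sInf_mem hne
    refine ⟨⟨a, by simpa using ha, hfa⟩, fun b hb => Nat.sInf_le ⟨b, by simpa using hb, rfl⟩⟩
  · rintro ⟨⟨a, ha, hfa⟩, hlb⟩
    refine le_antisymm (hfa ▸ Nat.sInf_le ⟨a, by simpa using ha, rfl⟩) ?_
    exact le_csInf hne (by rintro _ ⟨b, hb, rfl⟩; exact hlb b (by simpa using hb))

lemma signed_count_single {α : Type*} [DecidableEq α]
    (S : Finset α) (f : α → ℕ) (hf : Set.InjOn f ↑S) (k : ℕ) :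
    ∑ A ∈ S.powerset.filter (fun A => A.Nonempty ∧ minOnF f A = k),
        (-1 : ℤ) ^ (A.card + 1) =
      if S.Nonempty ∧ k = S.sup f then 1 else 0 := by
  by_cases hk : ∃ e ∈ S, f e = k
  · obtain ⟨e₀, he₀, hfe₀⟩ := hk
    set T := S.filter (fun e => k < f e) with hT
    have he₀T : e₀ ∉ T := by simp [hT, hfe₀]
    have himg : S.powerset.filter (fun A => A.Nonempty ∧ minOnF f A = k)
        = T.powerset.image (insert e₀) := by
      ext A
      simp only [Finset.mem_filter, Finset.mem_powerset, Finset.mem_image]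
      constructor
      · rintro ⟨hAS, hAne, hmin⟩
        rw [minOn_eq_iff hAne] at hmin
        obtain ⟨⟨a, ha, hfa⟩, hlb⟩ := hmin
        have hae : a = e₀ := hf (hAS ha) he₀ (by rw [hfa, hfe₀])
        refine ⟨A.erase e₀, ?_, ?_⟩
        · intro b hb
          have hb' := Finset.mem_of_mem_erase hb
          have hbne : b ≠ e₀ := Finset.ne_of_mem_erase hb
          refine Finset.mem_filter.2 ⟨hAS hb', lt_of_le_of_ne (hlb b hb') ?_⟩
          intro hkb
          exact hbne (hf (hAS hb') he₀ (by rw [← hkb, hfe₀]))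
        · rw [Finset.insert_erase (hae ▸ ha)]
      · rintro ⟨B, hBT, rfl⟩
        have hBS : B ⊆ S := hBT.trans (Finset.filter_subset _ _)
        refine ⟨Finset.insert_subset he₀ hBS, Finset.insert_nonempty _ _, ?_⟩
        rw [minOn_eq_iff (Finset.insert_nonempty _ _)]
        refine ⟨⟨e₀, Finset.mem_insert_self _ _, hfe₀⟩, ?_⟩
        intro a ha
        rcases Finset.mem_insert.1 ha with rfl | ha
        · exact hfe₀.ge
        · exact (Finset.mem_filter.1 (hBT ha)).2.le
    have hinj : ∀ B ∈ T.powerset, ∀ C ∈ T.powerset,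
        insert e₀ B = insert e₀ C → B = C := by
      intro B hB C hC h
      have hB' : e₀ ∉ B := fun hb => he₀T (Finset.mem_powerset.1 hB hb)
      have hC' : e₀ ∉ C := fun hc => he₀T (Finset.mem_powerset.1 hC hc)
      rw [← Finset.erase_insert hB', ← Finset.erase_insert hC', h]
    rw [himg, Finset.sum_image hinj]
    have : ∀ B ∈ T.powerset, (-1 : ℤ) ^ ((insert e₀ B).card + 1)
        = (-1 : ℤ) ^ B.card := by
      intro B hB
      have hB' : e₀ ∉ B := fun hb => he₀T (Finset.mem_powerset.1 hB hb)
      rw [Finset.card_insert_of_notMem hB']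
      ring
    rw [Finset.sum_congr rfl this, Finset.sum_powerset_neg_one_pow_card]
    have hTempty : T = ∅ ↔ k = S.sup f := by
      constructor
      · intro h
        refine le_antisymm (hfe₀ ▸ Finset.le_sup he₀) (Finset.sup_le fun b hb => ?_)
        by_contra hb'
        have hmem : b ∈ T := Finset.mem_filter.2 ⟨hb, not_le.1 hb'⟩
        rw [h] at hmem
        exact Finset.notMem_empty b hmem
      · intro h
        rw [Finset.eq_empty_iff_forall_notMem]
        intro b hb
        obtain ⟨hbS, hkb⟩ := Finset.mem_filter.1 hb
        exact absurd (h ▸ Finset.le_sup hbS) (not_le.2 hkb)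
    by_cases hT0 : T = ∅
    · rw [if_pos hT0, if_pos ⟨⟨e₀, he₀⟩, hTempty.1 hT0⟩]
    · rw [if_neg hT0, if_neg]
      rintro ⟨-, hks⟩
      exact hT0 (hTempty.2 hks)
  · push_neg at hk
    rw [Finset.filter_false_of_mem, Finset.sum_empty]
    · rw [if_neg]
      rintro ⟨hS, rfl⟩
      obtain ⟨e, he, hfe⟩ := Finset.exists_mem_eq_sup S hS f
      exact hk e he hfe.symm
    · rintro A hA ⟨hAne, hmin⟩
      rw [minOn_eq_iff hAne] at hmin
      obtain ⟨⟨a, ha, hfa⟩, -⟩ := hmin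
      exact hk a (Finset.mem_powerset.1 hA ha) hfa

/-- Multiple-item update rule (Theorem 6): if every item of the nonempty proper
subset `X ⊂ I` was seen further in the past than every item of `I \ X`
(`f a > f e` for `a ∈ X`, `e ∈ I \ X`), then the signed count of subsets `A ⊆ I`
meeting `X` with `min_A f = k` is `+1` at `k = max_{e ∈ I} f e`, `-1` at
`k = max_{e ∈ I \ X} f e`, and `0` elsewhere. -/
theorem signed_count_multi {α : Type*} [DecidableEq α]
    (I : Finset α) (f : α → ℕ) (hf : Set.InjOn f ↑I)
    (X : Finset α) (hXne : X.Nonempty) (hX : X ⊂ I)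
    (hsep : ∀ a ∈ X, ∀ e ∈ I \ X, f e < f a) (k : ℕ) :
    ∑ A ∈ I.powerset.filter (fun A => (A ∩ X).Nonempty ∧ minOnF f A = k),
        (-1 : ℤ) ^ (A.card + 1) =
      if k = I.sup f then 1 else if k = (I \ X).sup f then -1 else 0 := by
  classical
  have hsub : X ⊆ I := hX.subset
  have hIne : I.Nonempty := hXne.mono hsub
  obtain ⟨e₁, he₁I, he₁X⟩ := Finset.exists_of_ssubset hX
  have hIXne : (I \ X).Nonempty := ⟨e₁, Finset.mem_sdiff.2 ⟨he₁I, he₁X⟩⟩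
  -- split the sum
  have hsplit : I.powerset.filter (fun A => A.Nonempty ∧ minOnF f A = k)
      = I.powerset.filter (fun A => (A ∩ X).Nonempty ∧ minOnF f A = k)
        ∪ (I \ X).powerset.filter (fun A => A.Nonempty ∧ minOnF f A = k) := by
    ext A
    simp only [Finset.mem_union, Finset.mem_filter, Finset.mem_powerset]
    constructor
    · rintro ⟨hAI, hAne, hmin⟩
      by_cases hAX : (A ∩ X).Nonempty
      · exact Or.inl ⟨hAI, hAX, hmin⟩
      · refine Or.inr ⟨fun a ha => Finset.mem_sdiff.2 ⟨hAI ha, fun hax => ?_⟩, hAne, hmin⟩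
        exact hAX ⟨a, Finset.mem_inter.2 ⟨ha, hax⟩⟩
    · rintro (⟨hAI, hAX, hmin⟩ | ⟨hAIX, hAne, hmin⟩)
      · exact ⟨hAI, hAX.mono Finset.inter_subset_left, hmin⟩
      · exact ⟨hAIX.trans (Finset.sdiff_subset), hAne, hmin⟩
  have hdisj : Disjoint (I.powerset.filter (fun A => (A ∩ X).Nonempty ∧ minOnF f A = k))
      ((I \ X).powerset.filter (fun A => A.Nonempty ∧ minOnF f A = k)) := by
    rw [Finset.disjoint_left]
    rintro A hA hA'
    obtain ⟨-, hAX, -⟩ := Finset.mem_filter.1 hA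
    obtain ⟨hAIX, -, -⟩ := Finset.mem_filter.1 hA'
    obtain ⟨a, haA⟩ := hAX
    obtain ⟨haA', haX⟩ := Finset.mem_inter.1 haA
    exact (Finset.mem_sdiff.1 (Finset.mem_powerset.1 hAIX haA')).2 haX
  have hsum : ∑ A ∈ I.powerset.filter (fun A => A.Nonempty ∧ minOnF f A = k),
        (-1 : ℤ) ^ (A.card + 1)
      = (∑ A ∈ I.powerset.filter (fun A => (A ∩ X).Nonempty ∧ minOnF f A = k),
          (-1 : ℤ) ^ (A.card + 1))
        + ∑ A ∈ (I \ X).powerset.filter (fun A => A.Nonempty ∧ minOnF f A = k),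
          (-1 : ℤ) ^ (A.card + 1) := by
    rw [hsplit]
    exact Finset.sum_union hdisj
  have h1 := signed_count_single I f hf k
  have h2 := signed_count_single (I \ X) f (hf.mono (Finset.coe_subset.2 Finset.sdiff_subset)) k
  have key : ∑ A ∈ I.powerset.filter (fun A => (A ∩ X).Nonempty ∧ minOnF f A = k),
      (-1 : ℤ) ^ (A.card + 1)
      = (if k = I.sup f then 1 else 0) - (if k = (I \ X).sup f then 1 else 0) := by
    have := hsum
    rw [h1, h2] at this
    simp only [hIne, hIXne, true_and] at this
    omega
  rw [key]
  -- sup f (I \ X) < sup f I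
  obtain ⟨a, haX⟩ := hXne
  obtain ⟨e, heIX, hesup⟩ := Finset.exists_mem_eq_sup (I \ X) hIXne f
  have hlt : (I \ X).sup f < I.sup f :=
    hesup ▸ lt_of_lt_of_le (hsep a haX e heIX) (Finset.le_sup (hsub haX))
  by_cases h1' : k = I.sup f
  · have hne : ¬ k = (I \ X).sup f := by rw [h1']; exact hlt.ne'
    rw [if_pos h1', if_pos h1', if_neg hne]
    norm_num
  · rw [if_neg h1', if_neg h1']
    by_cases h2' : k = (I \ X).sup f
    · rw [if_pos h2', if_pos h2']; ring
    · rw [if_neg h2', if_neg h2']; ring
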